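/- Define q-Fibonacci polynomials by F_0(q) = F_1(q) = 1 and F_n(q) = F_{n-1}(q) + q·F_{n-2}(q). Let a be the reduced word s_k s_{k-1} s_{k+1} s_k ⋯ s_l s_{l-1} (for 2 ≤ k ≤ l) for w_{k,l} ∈ S_n, and let P_e(a) = Σ_{σ: π(w^σ)=e} q^{|D(σ)|} be the defect generating polynomial over masks whose subword product is the identity. Then P_e(a) = F_{l-k+1}(q). -/

import Mathlib

open Polynomial

/-- The simple transposition `s_i = (i, i+1)` (1-based) in `S_n`, acting on `Fin n`
(0-based positions `i-1` and `i`); equals `1` if `i` is out of range. -/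
def gen (n : ℕ) (i : ℕ) : Equiv.Perm (Fin n) :=
  if h : 1 ≤ i ∧ i < n then Equiv.swap ⟨i - 1, by omega⟩ ⟨i, h.2⟩ else 1

/-- Product of the word `l` of generator indices. -/
def wordProd (n : ℕ) (l : List ℕ) : Equiv.Perm (Fin n) :=
  (l.map (gen n)).prod

/-- Coxeter length of `w ∈ S_n`. -/
noncomputable def len (n : ℕ) (w : Equiv.Perm (Fin n)) : ℕ :=
  sInf {r | ∃ l : List ℕ, (∀ i ∈ l, 1 ≤ i ∧ i < n) ∧ wordProd n l = w ∧ l.length = r}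

/-- `l` is a reduced word for `w`. -/
def IsReducedWord (n : ℕ) (w : Equiv.Perm (Fin n)) (l : List ℕ) : Prop :=
  (∀ i ∈ l, 1 ≤ i ∧ i < n) ∧ wordProd n l = w ∧ l.length = len n w

/-- Bruhat-Chevalley order: `x ≤ w` iff every reduced word for `w` contains a
subword whose product is `x`. -/
def Bruhat (n : ℕ) (x w : Equiv.Perm (Fin n)) : Prop :=
  ∀ l, IsReducedWord n w l → ∃ t, t.Sublist l ∧ wordProd n t = x

/-- `w` is 321-avoiding: no `i < j < k` with `w i > w j > w k`. -/
def Avoids321 (n : ℕ) (w : Equiv.Perm (Fin n)) : Prop :=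
  ¬ ∃ i j k : Fin n, i < j ∧ j < k ∧ w j < w i ∧ w k < w j

/-- Product of the subword of `l` selected by the mask `S` (set of selected positions). -/
def maskProd (n : ℕ) (l : List ℕ) (S : Finset ℕ) : Equiv.Perm (Fin n) :=
  wordProd n (((List.range l.length).filter (fun j => decide (j ∈ S))).map (fun j => l.getD j 0))

/-- Position `j` of the word `l` is a defect of the mask `S`. -/
noncomputable def IsDefect (n : ℕ) (l : List ℕ) (S : Finset ℕ) (j : ℕ) : Prop :=
  len n (maskProd n (l.take j) S * gen n (l.getD j 0)) < len n (maskProd n (l.take j) S)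

/-- The defect set `D(σ)` of the mask `S` on the word `l`. -/
noncomputable def defectSet (n : ℕ) (l : List ℕ) (S : Finset ℕ) : Finset ℕ :=
  (Finset.range l.length).filter (fun j =>
    len n (maskProd n (l.take j) S * gen n (l.getD j 0)) < len n (maskProd n (l.take j) S))

/-- Deodhar's defect generating polynomial `P_x(a) = Σ_{σ : π(w^σ) = x} q^{|D(σ)|}`. -/
noncomputable def defPoly (n : ℕ) (l : List ℕ) (x : Equiv.Perm (Fin n)) : Polynomial ℤ :=
  ∑ S ∈ (Finset.range l.length).powerset,
    if maskProd n l S = x then (X : Polynomial ℤ) ^ (defectSet n l S).card else 0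


/-- The word `s_k s_{k-1} s_{k+1} s_k ⋯ s_l s_{l-1}` for `w_{k,l}`. -/
def wklWord (k l : ℕ) : List ℕ :=
  (List.range (l - k + 1)).flatMap (fun m => [k + m, k + m - 1])

/-- q-Fibonacci polynomials: `F_0 = F_1 = 1`, `F_m = F_{m-1} + q F_{m-2}`. -/
noncomputable def qFib : ℕ → Polynomial ℤ
  | 0 => 1
  | 1 => 1
  | (m + 2) => qFib (m + 1) + X * qFib m

section LengthTheory

variable {n : ℕ}

lemma gen_mul_self (i : ℕ) : gen n i * gen n i = 1 := by
  unfold gen; split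
  · exact Equiv.swap_mul_self _ _
  · simp

lemma gen_gen (i : ℕ) (x : Fin n) : gen n i (gen n i x) = x := by
  have : (gen n i * gen n i) x = (1 : Equiv.Perm (Fin n)) x := by rw [gen_mul_self]
  simpa using this

lemma gen_val (i : ℕ) (h1 : 1 ≤ i) (h2 : i < n) (x : Fin n) :
    ((gen n i x : Fin n) : ℕ)
      = if (x : ℕ) = i - 1 then i else if (x : ℕ) = i then i - 1 else (x : ℕ) := by
  rw [gen, dif_pos ⟨h1, h2⟩]
  rcases x with ⟨p, hp⟩
  by_cases e1 : p = i - 1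
  · subst e1
    rw [Equiv.swap_apply_left]
    simp
  · by_cases e2 : p = i
    · subst e2
      rw [Equiv.swap_apply_right]
      simp [e1]
    · rw [Equiv.swap_apply_of_ne_of_ne (by simp [Fin.ext_iff, e1]) (by simp [Fin.ext_iff, e2])]
      simp [e1, e2]

lemma gen_apply_of_ne (i p : ℕ) (hp : p < n) (ha : p ≠ i - 1) (hb : p ≠ i) :
    gen n i ⟨p, hp⟩ = ⟨p, hp⟩ := by
  unfold gen; split
  · exact Equiv.swap_apply_of_ne_of_ne (by simp [Fin.ext_iff, ha]) (by simp [Fin.ext_iff, hb])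
  · rfl

lemma gen_apply_sub (i : ℕ) (h1 : 1 ≤ i) (h2 : i < n) :
    gen n i ⟨i - 1, by omega⟩ = ⟨i, h2⟩ := by
  rw [Fin.ext_iff, gen_val i h1 h2]; simp

lemma gen_apply_top (i : ℕ) (h1 : 1 ≤ i) (h2 : i < n) :
    gen n i ⟨i, h2⟩ = ⟨i - 1, by omega⟩ := by
  rw [Fin.ext_iff, gen_val i h1 h2]; simp only [Fin.val_mk]; split_ifs <;> omega

lemma gen_lt_gen (i : ℕ) (h1 : 1 ≤ i) (h2 : i < n) (u v : Fin n) (huv : u < v)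
    (hne : ¬((u : ℕ) = i - 1 ∧ (v : ℕ) = i)) : gen n i u < gen n i v := by
  have g1 := gen_val i h1 h2 u
  have g2 := gen_val i h1 h2 v
  rw [Fin.lt_def] at huv ⊢
  split_ifs at g1 g2 <;> omega

def invSet (n : ℕ) (w : Equiv.Perm (Fin n)) : Finset (Fin n × Fin n) :=
  Finset.univ.filter (fun p => p.1 < p.2 ∧ w p.2 < w p.1)

def invNum (n : ℕ) (w : Equiv.Perm (Fin n)) : ℕ := (invSet n w).card

lemma invNum_one : invNum n 1 = 0 := by
  rw [invNum, Finset.card_eq_zero, invSet]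
  ext p
  simp only [Finset.mem_filter, Finset.mem_univ, true_and, Finset.notMem_empty, iff_false]
  rintro ⟨hlt, h2⟩
  simp only [Equiv.Perm.one_apply] at h2
  exact absurd hlt (not_lt.2 h2.le)

lemma invNum_mul_gen_asc (w : Equiv.Perm (Fin n)) (i : ℕ) (h1 : 1 ≤ i) (h2 : i < n)
    (hw : w ⟨i - 1, by omega⟩ < w ⟨i, h2⟩) :
    invNum n (w * gen n i) = invNum n w + 1 := by
  have key : invSet n (w * gen n i)
      = insert ((⟨i - 1, by omega⟩ : Fin n), (⟨i, h2⟩ : Fin n))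
          ((invSet n w).image (fun p => (gen n i p.1, gen n i p.2))) := by
    ext ⟨x, y⟩
    simp only [invSet, Finset.mem_filter, Finset.mem_univ, true_and]
    simp only [invSet, Finset.mem_filter, Finset.mem_univ, true_and, Finset.mem_insert,
      Finset.mem_image, Equiv.Perm.mul_apply, Prod.exists, Prod.mk.injEq]
    constructor
    · rintro ⟨hxy, hw2⟩
      by_cases hab : x = (⟨i - 1, by omega⟩ : Fin n) ∧ y = (⟨i, h2⟩ : Fin n)
      · exact Or.inl hab
      · refine Or.inr ⟨gen n i x, gen n i y,
          ⟨gen_lt_gen i h1 h2 x y hxy ?_, hw2⟩, gen_gen i x, gen_gen i y⟩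
        simp only [Fin.ext_iff] at hab
        intro hc
        exact hab ⟨hc.1, hc.2⟩
    · rintro (⟨hx, hy⟩ | ⟨u, v, ⟨huv, hwuv⟩, hu, hv⟩)
      · subst hx; subst hy
        refine ⟨by rw [Fin.lt_def]; simp; omega, ?_⟩
        rw [gen_apply_top i h1 h2, gen_apply_sub i h1 h2]
        exact hw
      · subst hu; subst hv
        have hne : ¬((u : ℕ) = i - 1 ∧ (v : ℕ) = i) := by
          rintro ⟨hc1, hc2⟩
          have hu' : u = (⟨i - 1, by omega⟩ : Fin n) := Fin.ext hc1
          have hv' : v = (⟨i, h2⟩ : Fin n) := Fin.ext hc2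
          rw [hu', hv'] at hwuv
          exact absurd hw (not_lt.2 hwuv.le)
        exact ⟨gen_lt_gen i h1 h2 u v huv hne, by rwa [gen_gen, gen_gen]⟩
  have hout : ((⟨i - 1, by omega⟩ : Fin n), (⟨i, h2⟩ : Fin n))
      ∉ (invSet n w).image (fun p => (gen n i p.1, gen n i p.2)) := by
    simp only [Finset.mem_image, Prod.exists, Prod.mk.injEq]
    rintro ⟨u, v, hm, hu, hv⟩
    have hu' : u = gen n i ⟨i - 1, by omega⟩ := by rw [← hu, gen_gen]
    have hv' : v = gen n i ⟨i, h2⟩ := by rw [← hv, gen_gen]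
    rw [gen_apply_sub i h1 h2] at hu'
    rw [gen_apply_top i h1 h2] at hv'
    simp only [invSet, Finset.mem_filter] at hm
    have := hm.2.1
    rw [hu', hv', Fin.lt_def] at this
    simp at this
    omega
  have hinj : Function.Injective (fun p : Fin n × Fin n => (gen n i p.1, gen n i p.2)) := by
    intro p q h
    simp only [Prod.mk.injEq] at h
    exact Prod.ext ((gen n i).injective h.1) ((gen n i).injective h.2)
  rw [invNum, invNum, key, Finset.card_insert_of_notMem hout,
    Finset.card_image_of_injective _ hinj]

lemma invNum_mul_gen_desc (w : Equiv.Perm (Fin n)) (i : ℕ) (h1 : 1 ≤ i) (h2 : i < n)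
    (hw : w ⟨i, h2⟩ < w ⟨i - 1, by omega⟩) :
    invNum n w = invNum n (w * gen n i) + 1 := by
  have := invNum_mul_gen_asc (w * gen n i) i h1 h2
    (by simp only [Equiv.Perm.mul_apply, gen_apply_sub i h1 h2, gen_apply_top i h1 h2]; exact hw)
  rwa [mul_assoc, gen_mul_self, mul_one] at this

end LengthTheory

section LengthTheory2

variable {n : ℕ}

lemma wordProd_nil : wordProd n [] = 1 := rfl

lemma wordProd_append (u v : List ℕ) : wordProd n (u ++ v) = wordProd n u * wordProd n v := by
  simp [wordProd, List.map_append, List.prod_append]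

lemma wordProd_singleton (i : ℕ) : wordProd n [i] = gen n i := by
  simp [wordProd]

lemma apply_le_of_strictMono (w : Equiv.Perm (Fin n)) (h : StrictMono w) :
    ∀ m (hm : m < n), m ≤ (w ⟨m, hm⟩ : Fin n) := by
  intro m
  induction m with
  | zero => intro _; exact Nat.zero_le _
  | succ m ih =>
    intro hm
    have h1 := ih (by omega)
    have h2 : w ⟨m, by omega⟩ < w ⟨m + 1, hm⟩ := h (by rw [Fin.lt_def]; simp)
    rw [Fin.lt_def] at h2
    omega

lemma eq_one_of_strictMono (w : Equiv.Perm (Fin n)) (h : StrictMono w) : w = 1 := by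
  have hinv : StrictMono ⇑w⁻¹ := by
    intro x y hxy
    rcases lt_trichotomy (w⁻¹ x) (w⁻¹ y) with hc | hc | hc
    · exact hc
    · exfalso
      have hxyeq : x = y := by
        have := congrArg w hc
        simpa using this
      rw [hxyeq] at hxy
      exact lt_irrefl y hxy
    · have := h hc
      simp only [Equiv.Perm.inv_def, Equiv.apply_symm_apply] at this
      exact absurd hxy (not_lt.2 this.le)
  ext x
  have h1 := apply_le_of_strictMono w h x.val x.isLt
  have h2 := apply_le_of_strictMono w⁻¹ hinv (w x).val (w x).isLt
  simp only [Fin.eta] at h1 h2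
  rw [Equiv.Perm.inv_def, Equiv.symm_apply_apply] at h2
  simp only [Equiv.Perm.one_apply]
  omega

lemma strictMono_of_no_descent (w : Equiv.Perm (Fin n))
    (h : ∀ i, 1 ≤ i → (h2 : i < n) → w ⟨i - 1, by omega⟩ < w ⟨i, h2⟩) : StrictMono w := by
  have key : ∀ j (hj : j < n) (x : Fin n), (x : ℕ) < j → w x < w ⟨j, hj⟩ := by
    intro j
    induction j with
    | zero => intro _ x hx; omega
    | succ j ih =>
      intro hj x hx
      have hstep := h (j + 1) (by omega) hj
      simp only [Nat.add_sub_cancel] at hstep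
      rcases Nat.lt_or_ge (x : ℕ) j with hc | hc
      · exact lt_trans (ih (by omega) x hc) hstep
      · have : x = (⟨j, by omega⟩ : Fin n) := Fin.ext (by simp only [Fin.val_mk]; omega)
        rw [this]
        exact hstep
  intro x y hxy
  have := key y.val y.isLt x (by rwa [Fin.lt_def] at hxy)
  simpa using this

lemma exists_descent (w : Equiv.Perm (Fin n)) (h : w ≠ 1) :
    ∃ i, ∃ (h1 : 1 ≤ i) (h2 : i < n), w ⟨i, h2⟩ < w ⟨i - 1, by omega⟩ := by
  by_contra hc
  push_neg at hc
  apply h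
  apply eq_one_of_strictMono
  apply strictMono_of_no_descent
  intro i h1 h2
  have := hc i h1 h2
  rcases lt_trichotomy (w ⟨i - 1, by omega⟩) (w ⟨i, h2⟩) with hlt | heq | hgt
  · exact hlt
  · exfalso
    have : (⟨i - 1, by omega⟩ : Fin n) = ⟨i, h2⟩ := w.injective heq
    rw [Fin.ext_iff] at this
    simp at this
    omega
  · exact absurd hgt (not_lt.2 this)

lemma exists_word (w : Equiv.Perm (Fin n)) :
    ∃ l : List ℕ, (∀ i ∈ l, 1 ≤ i ∧ i < n) ∧ wordProd n l = w ∧ l.length = invNum n w := by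
  suffices H : ∀ N w, invNum n w = N →
      ∃ l : List ℕ, (∀ i ∈ l, 1 ≤ i ∧ i < n) ∧ wordProd n l = w ∧ l.length = N by
    obtain ⟨l, h1, h2, h3⟩ := H (invNum n w) w rfl
    exact ⟨l, h1, h2, h3⟩
  intro N
  induction N using Nat.strong_induction_on with
  | _ N ih =>
    intro w hw
    by_cases h1 : w = 1
    · subst h1
      exact ⟨[], by simp, wordProd_nil, by simp [← hw, invNum_one]⟩
    · obtain ⟨i, hi1, hi2, hdesc⟩ := exists_descent w h1
      have hd := invNum_mul_gen_desc w i hi1 hi2 hdesc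
      obtain ⟨l, hl1, hl2, hl3⟩ := ih (invNum n (w * gen n i)) (by omega) _ rfl
      refine ⟨l ++ [i], ?_, ?_, ?_⟩
      · intro j hj
        rcases List.mem_append.1 hj with h | h
        · exact hl1 j h
        · simp at h; subst h; exact ⟨hi1, hi2⟩
      · rw [wordProd_append, wordProd_singleton, hl2, mul_assoc, gen_mul_self, mul_one]
      · simp [hl3]; omega

lemma invNum_mul_gen_le (w : Equiv.Perm (Fin n)) (i : ℕ) :
    invNum n (w * gen n i) ≤ invNum n w + 1 := by
  by_cases h : 1 ≤ i ∧ i < n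
  · obtain ⟨h1, h2⟩ := h
    rcases lt_trichotomy (w ⟨i - 1, by omega⟩) (w ⟨i, h2⟩) with hlt | heq | hgt
    · rw [invNum_mul_gen_asc w i h1 h2 hlt]
    · exfalso
      have : (⟨i - 1, by omega⟩ : Fin n) = ⟨i, h2⟩ := w.injective heq
      rw [Fin.ext_iff] at this; simp at this; omega
    · have := invNum_mul_gen_desc w i h1 h2 hgt; omega
  · rw [gen, dif_neg h, mul_one]; omega

lemma invNum_wordProd_le (l : List ℕ) : invNum n (wordProd n l) ≤ l.length := by
  induction l using List.reverseRecOn with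
  | nil => rw [wordProd_nil, invNum_one]; simp
  | append_singleton t i ih =>
    rw [wordProd_append, wordProd_singleton]
    calc invNum n (wordProd n t * gen n i) ≤ invNum n (wordProd n t) + 1 :=
          invNum_mul_gen_le _ _
    _ ≤ t.length + 1 := by omega
    _ = (t ++ [i]).length := by simp

lemma len_eq_invNum (w : Equiv.Perm (Fin n)) : len n w = invNum n w := by
  obtain ⟨l, hv, hp, hlen⟩ := exists_word w
  unfold len
  apply le_antisymm
  · exact Nat.sInf_le (by rw [Set.mem_setOf_eq]; exact ⟨l, hv, hp, hlen⟩)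
  · apply le_csInf ⟨invNum n w, by rw [Set.mem_setOf_eq]; exact ⟨l, hv, hp, hlen⟩⟩
    rintro r ⟨l', hv', hp', hlen'⟩
    rw [← hlen', ← hp']
    exact invNum_wordProd_le l'

lemma len_lt_iff (w : Equiv.Perm (Fin n)) (i : ℕ) (h1 : 1 ≤ i) (h2 : i < n) :
    len n (w * gen n i) < len n w ↔ w ⟨i, h2⟩ < w ⟨i - 1, by omega⟩ := by
  rw [len_eq_invNum, len_eq_invNum]
  constructor
  · intro h
    by_contra hc
    rcases lt_trichotomy (w ⟨i - 1, by omega⟩) (w ⟨i, h2⟩) with hlt | heq | hgt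
    · rw [invNum_mul_gen_asc w i h1 h2 hlt] at h; omega
    · have : (⟨i - 1, by omega⟩ : Fin n) = ⟨i, h2⟩ := w.injective heq
      rw [Fin.ext_iff] at this; simp at this; omega
    · exact hc hgt
  · intro h
    have := invNum_mul_gen_desc w i h1 h2 h
    omega

lemma lt_len_iff (w : Equiv.Perm (Fin n)) (i : ℕ) (h1 : 1 ≤ i) (h2 : i < n) :
    len n w < len n (w * gen n i) ↔ w ⟨i - 1, by omega⟩ < w ⟨i, h2⟩ := by
  rw [len_eq_invNum, len_eq_invNum]
  constructor
  · intro h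
    by_contra hc
    rcases lt_trichotomy (w ⟨i - 1, by omega⟩) (w ⟨i, h2⟩) with hlt | heq | hgt
    · exact hc hlt
    · have : (⟨i - 1, by omega⟩ : Fin n) = ⟨i, h2⟩ := w.injective heq
      rw [Fin.ext_iff] at this; simp at this; omega
    · rw [invNum_mul_gen_desc w i h1 h2 hgt] at h; omega
  · intro h
    rw [invNum_mul_gen_asc w i h1 h2 h]
    omega

end LengthTheory2

section Peel

variable {n : ℕ}

lemma maskProd_insert_of_le (t : List ℕ) (S : Finset ℕ) (N : ℕ) (h : t.length ≤ N) :
    maskProd n t (insert N S) = maskProd n t S := by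
  unfold maskProd
  congr 2
  apply List.filter_congr
  intro j hj
  rw [List.mem_range] at hj
  simp only [decide_eq_decide, Finset.mem_insert]
  exact or_iff_right (by omega)

lemma maskProd_append_single (t : List ℕ) (i : ℕ) (S : Finset ℕ) :
    maskProd n (t ++ [i]) S = maskProd n t S * (if t.length ∈ S then gen n i else 1) := by
  unfold maskProd
  have hlen : (t ++ [i]).length = t.length + 1 := by simp
  rw [hlen, List.range_succ, List.filter_append, List.map_append, wordProd_append]
  congr 1
  · congr 1
    apply List.map_congr_left
    intro j hj
    have hj' : j < t.length := List.mem_range.1 (List.mem_of_mem_filter hj)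
    exact List.getD_append _ _ _ _ hj'
  · by_cases hN : t.length ∈ S
    · rw [List.filter_singleton]
      simp only [hN, decide_true, if_true]
      have hgetD : (t ++ [i]).getD t.length 0 = i := by
        rw [List.getD_append_right _ _ _ _ (le_refl _)]
        simp
      simp [hgetD, wordProd_singleton, hN]
    · rw [List.filter_singleton]
      simp [hN, wordProd_nil]

lemma defectSet_insert_of_le (t : List ℕ) (S : Finset ℕ) (N : ℕ) (h : t.length ≤ N) :
    defectSet n t (insert N S) = defectSet n t S := by
  unfold defectSet
  apply Finset.filter_congr
  intro j hj
  rw [Finset.mem_range] at hj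
  rw [maskProd_insert_of_le (t.take j) S N (by rw [List.length_take]; omega)]

lemma defectSet_card_append (t : List ℕ) (i : ℕ) (S : Finset ℕ) :
    (defectSet n (t ++ [i]) S).card = (defectSet n t S).card +
      (if len n (maskProd n t S * gen n i) < len n (maskProd n t S) then 1 else 0) := by
  unfold defectSet
  have hlen : (t ++ [i]).length = t.length + 1 := by simp
  rw [hlen, Finset.range_add_one, Finset.filter_insert]
  have hfil : ∀ (P : ℕ → Prop) (_ : DecidablePred P), True := fun _ _ => trivial
  have hset : Finset.filter (fun j =>
        len n (maskProd n ((t ++ [i]).take j) S * gen n ((t ++ [i]).getD j 0))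
          < len n (maskProd n ((t ++ [i]).take j) S)) (Finset.range t.length)
      = Finset.filter (fun j =>
        len n (maskProd n (t.take j) S * gen n (t.getD j 0))
          < len n (maskProd n (t.take j) S)) (Finset.range t.length) := by
    apply Finset.filter_congr
    intro j hj
    rw [Finset.mem_range] at hj
    rw [List.take_append_of_le_length (le_of_lt hj), List.getD_append _ _ _ _ hj]
  have htake : (t ++ [i]).take t.length = t := List.take_left
  have hgetD : (t ++ [i]).getD t.length 0 = i := by
    rw [List.getD_append_right _ _ _ _ (le_refl _)]
    simp
  rw [htake, hgetD, hset]
  split_ifs with hC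
  · rw [Finset.card_insert_of_notMem]
    intro hmem
    have := Finset.mem_range.1 (Finset.mem_of_mem_filter _ hmem)
    omega
  · simp

lemma defPoly_append_single (t : List ℕ) (i : ℕ) (x : Equiv.Perm (Fin n)) :
    defPoly n (t ++ [i]) x =
      (if len n (x * gen n i) < len n x then (X : Polynomial ℤ) else 1) * defPoly n t x
      + (if len n x < len n (x * gen n i) then (X : Polynomial ℤ) else 1)
          * defPoly n t (x * gen n i) := by
  unfold defPoly
  have hlen : (t ++ [i]).length = t.length + 1 := by simp
  rw [hlen, Finset.range_add_one, Finset.sum_powerset_insert (by simp)]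
  congr 1
  · rw [Finset.mul_sum]
    apply Finset.sum_congr rfl
    intro S hS
    have hNS : t.length ∉ S := fun hmem => by
      have := Finset.mem_powerset.1 hS hmem
      exact absurd (Finset.mem_range.1 this) (by omega)
    rw [maskProd_append_single, if_neg hNS, mul_one, defectSet_card_append]
    by_cases hx : maskProd n t S = x
    · rw [if_pos hx, if_pos hx, hx, pow_add]
      split_ifs with h
      · rw [pow_one]; ring
      · rw [pow_zero]; ring
    · rw [if_neg hx, if_neg hx, mul_zero]
  · rw [Finset.mul_sum]
    apply Finset.sum_congr rfl
    intro S hS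
    rw [maskProd_append_single, if_pos (Finset.mem_insert_self _ _), defectSet_card_append,
      maskProd_insert_of_le t S t.length le_rfl, defectSet_insert_of_le t S t.length le_rfl]
    by_cases hx : maskProd n t S = x * gen n i
    · have hx' : maskProd n t S * gen n i = x := by
        rw [hx, mul_assoc, gen_mul_self, mul_one]
      rw [if_pos hx', if_pos hx, hx]
      rw [show x * gen n i * gen n i = x from by rw [mul_assoc, gen_mul_self, mul_one]]
      rw [pow_add]
      split_ifs with h
      · rw [pow_one]; ring
      · rw [pow_zero]; ring
    · have hx2 : maskProd n t S * gen n i ≠ x := fun h =>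
        hx (by rw [← h, mul_assoc, gen_mul_self, mul_one])
      rw [if_neg hx2, if_neg hx, mul_zero]

lemma wordProd_apply_fixed (l : List ℕ) (L : ℕ) (hl : ∀ j ∈ l, j ≤ L) (p : ℕ) (hp : p < n)
    (hLp : L < p) : wordProd n l ⟨p, hp⟩ = ⟨p, hp⟩ := by
  induction l with
  | nil => rfl
  | cons a tl ih =>
    have hstep : wordProd n (a :: tl) = gen n a * wordProd n tl := by
      simp [wordProd]
    rw [hstep, Equiv.Perm.mul_apply, ih (fun j hj => hl j (List.mem_cons_of_mem a hj))]
    have ha := hl a List.mem_cons_self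
    exact gen_apply_of_ne a p hp (by omega) (by omega)

lemma defPoly_eq_zero (w : List ℕ) (x : Equiv.Perm (Fin n)) (L p : ℕ)
    (hw : ∀ j ∈ w, j ≤ L) (hp : p < n) (hLp : L < p) (hx : x ⟨p, hp⟩ ≠ ⟨p, hp⟩) :
    defPoly n w x = 0 := by
  unfold defPoly
  apply Finset.sum_eq_zero
  intro S hS
  rw [if_neg]
  intro h
  apply hx
  rw [← h]
  unfold maskProd
  apply wordProd_apply_fixed _ L _ p hp hLp
  intro j hj
  simp only [List.mem_map] at hj
  obtain ⟨j', hj', rfl⟩ := hj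
  have hlt : j' < w.length := List.mem_range.1 (List.mem_of_mem_filter hj')
  rw [List.getD_eq_getElem w 0 hlt]
  exact hw _ (List.getElem_mem hlt)

lemma defPoly_nil (x : Equiv.Perm (Fin n)) : defPoly n [] x = if x = 1 then 1 else 0 := by
  unfold defPoly
  simp only [List.length_nil, Finset.range_zero, Finset.powerset_empty, Finset.sum_singleton]
  have h1 : maskProd n [] ∅ = 1 := rfl
  have h2 : defectSet n [] (∅ : Finset ℕ) = ∅ := rfl
  rw [h1, h2]
  simp [eq_comm]

end Peel

section WordShape

variable {n : ℕ}

lemma wklWord_self (k : ℕ) : wklWord k k = [k, k - 1] := by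
  unfold wklWord
  rw [Nat.sub_self]
  rw [List.range_succ, List.range_zero, List.flatMap_append]
  simp

lemma wklWord_succ (k l : ℕ) (h : k ≤ l) : wklWord k (l + 1) = wklWord k l ++ [l + 1, l] := by
  unfold wklWord
  have h1 : l + 1 - k + 1 = (l - k + 1) + 1 := by omega
  rw [h1, List.range_succ, List.flatMap_append]
  congr 1
  have h2 : k + (l - k + 1) = l + 1 := by omega
  simp only [List.flatMap_cons, List.flatMap_nil, List.append_nil, h2]
  simp

lemma wklWord_le (k l : ℕ) (hkl : k ≤ l) : ∀ j ∈ wklWord k l, j ≤ l := by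
  intro j hj
  unfold wklWord at hj
  simp only [List.mem_flatMap, List.mem_range, List.mem_cons, List.not_mem_nil, or_false,
    List.mem_singleton] at hj
  obtain ⟨m, hm, hj | hj⟩ := hj <;> omega

lemma ite_len_lt (x : Equiv.Perm (Fin n)) (i : ℕ) (h1 : 1 ≤ i) (h2 : i < n) :
    (if len n (x * gen n i) < len n x then (X : Polynomial ℤ) else 1)
      = if ((x ⟨i, h2⟩ : Fin n) : ℕ) < ((x ⟨i - 1, by omega⟩ : Fin n) : ℕ) then X else 1 := by
  apply if_congr _ rfl rfl
  rw [len_lt_iff x i h1 h2, Fin.lt_def]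

lemma ite_lt_len (x : Equiv.Perm (Fin n)) (i : ℕ) (h1 : 1 ≤ i) (h2 : i < n) :
    (if len n x < len n (x * gen n i) then (X : Polynomial ℤ) else 1)
      = if ((x ⟨i - 1, by omega⟩ : Fin n) : ℕ) < ((x ⟨i, h2⟩ : Fin n) : ℕ) then X else 1 := by
  apply if_congr _ rfl rfl
  rw [lt_len_iff x i h1 h2, Fin.lt_def]

lemma gen_apply_ne_self (i : ℕ) (h1 : 1 ≤ i) (h2 : i < n) :
    gen n i ⟨i, h2⟩ ≠ ⟨i, h2⟩ := by
  rw [gen_apply_top i h1 h2]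
  intro he
  rw [Fin.ext_iff] at he
  simp only [Fin.val_mk] at he
  omega

lemma ne_one_of_apply {x : Equiv.Perm (Fin n)} (p : Fin n)
    (h : ((x p : Fin n) : ℕ) ≠ (p : ℕ)) : x ≠ 1 := by
  intro he
  rw [he] at h
  simp at h

end WordShape

section CondEval

variable {n : ℕ}

lemma ite1_eq_one (x : Equiv.Perm (Fin n)) (i : ℕ) (h1 : 1 ≤ i) (h2 : i < n)
    (h : ¬ ((x ⟨i, h2⟩ : Fin n) : ℕ) < ((x ⟨i - 1, by omega⟩ : Fin n) : ℕ)) :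
    (if len n (x * gen n i) < len n x then (X : Polynomial ℤ) else 1) = 1 := by
  rw [ite_len_lt x i h1 h2, if_neg h]

lemma ite1_eq_X (x : Equiv.Perm (Fin n)) (i : ℕ) (h1 : 1 ≤ i) (h2 : i < n)
    (h : ((x ⟨i, h2⟩ : Fin n) : ℕ) < ((x ⟨i - 1, by omega⟩ : Fin n) : ℕ)) :
    (if len n (x * gen n i) < len n x then (X : Polynomial ℤ) else 1) = X := by
  rw [ite_len_lt x i h1 h2, if_pos h]

lemma ite2_eq_one (x : Equiv.Perm (Fin n)) (i : ℕ) (h1 : 1 ≤ i) (h2 : i < n)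
    (h : ¬ ((x ⟨i - 1, by omega⟩ : Fin n) : ℕ) < ((x ⟨i, h2⟩ : Fin n) : ℕ)) :
    (if len n x < len n (x * gen n i) then (X : Polynomial ℤ) else 1) = 1 := by
  rw [ite_lt_len x i h1 h2, if_neg h]

lemma ite2_eq_X (x : Equiv.Perm (Fin n)) (i : ℕ) (h1 : 1 ≤ i) (h2 : i < n)
    (h : ((x ⟨i - 1, by omega⟩ : Fin n) : ℕ) < ((x ⟨i, h2⟩ : Fin n) : ℕ)) :
    (if len n x < len n (x * gen n i) then (X : Polynomial ℤ) else 1) = X := by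
  rw [ite_lt_len x i h1 h2, if_pos h]

end CondEval

section Base

variable {n k : ℕ}

lemma base_F (hk : 2 ≤ k) (hkn : k < n) : defPoly n (wklWord k k) 1 = 1 := by
  have gk := gen_val (n := n) k (by omega) hkn
  have gk1 := gen_val (n := n) (k - 1) (by omega) (by omega)
  have e1 : defPoly n [k] 1 = 1 := by
    rw [show ([k] : List ℕ) = ([] ++ [k]) from rfl, defPoly_append_single]
    rw [ite1_eq_one 1 k (by omega) hkn
        (by simp only [Equiv.Perm.one_apply, Fin.val_mk]; omega)]
    rw [ite2_eq_X 1 k (by omega) hkn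
        (by simp only [Equiv.Perm.one_apply, Fin.val_mk]; omega)]
    rw [one_mul, one_mul, defPoly_nil, if_pos rfl, defPoly_nil,
      if_neg (ne_one_of_apply ⟨k, hkn⟩
        (by rw [gk]; simp only [Fin.val_mk]; split_ifs <;> omega))]
    ring
  have e2 : defPoly n [k] (gen n (k - 1)) = 0 := by
    rw [show ([k] : List ℕ) = ([] ++ [k]) from rfl, defPoly_append_single]
    rw [defPoly_nil, defPoly_nil]
    rw [if_neg (ne_one_of_apply (⟨k - 1, by omega⟩ : Fin n)
        (by rw [gk1]; simp only [Fin.val_mk]; split_ifs <;> omega))]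
    rw [if_neg (ne_one_of_apply (⟨k, hkn⟩ : Fin n)
        (by simp only [Equiv.Perm.mul_apply, gk, gk1, Fin.val_mk]; split_ifs <;> omega))]
    ring
  rw [wklWord_self, show ([k, k - 1] : List ℕ) = ([k] ++ [k - 1]) from rfl,
    defPoly_append_single]
  rw [ite1_eq_one 1 (k - 1) (by omega) (by omega)
      (by simp only [Equiv.Perm.one_apply, Fin.val_mk]; omega)]
  rw [ite2_eq_X 1 (k - 1) (by omega) (by omega)
      (by simp only [Equiv.Perm.one_apply, Fin.val_mk]; omega)]
  rw [one_mul, one_mul, e1, e2]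
  ring

lemma base_G (hk : 2 ≤ k) (hkn : k < n) : defPoly n (wklWord k k) (gen n k) = 1 := by
  have gk := gen_val (n := n) k (by omega) hkn
  have gk1 := gen_val (n := n) (k - 1) (by omega) (by omega)
  have e3 : defPoly n [k] (gen n k) = 1 := by
    rw [show ([k] : List ℕ) = ([] ++ [k]) from rfl, defPoly_append_single]
    rw [ite1_eq_X (gen n k) k (by omega) hkn
        (by simp only [gk, Fin.val_mk]; split_ifs <;> omega)]
    rw [ite2_eq_one (gen n k) k (by omega) hkn
        (by simp only [gk, Fin.val_mk]; split_ifs <;> omega)]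
    rw [gen_mul_self, one_mul, defPoly_nil, defPoly_nil, if_pos rfl,
      if_neg (ne_one_of_apply (⟨k, hkn⟩ : Fin n)
        (by rw [gk]; simp only [Fin.val_mk]; split_ifs <;> omega))]
    ring
  have e4 : defPoly n [k] (gen n k * gen n (k - 1)) = 0 := by
    rw [show ([k] : List ℕ) = ([] ++ [k]) from rfl, defPoly_append_single]
    rw [defPoly_nil, defPoly_nil]
    rw [if_neg (ne_one_of_apply (⟨k, hkn⟩ : Fin n)
        (by simp only [Equiv.Perm.mul_apply, gk, gk1, Fin.val_mk]; split_ifs <;> omega))]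
    rw [if_neg (ne_one_of_apply (⟨k, hkn⟩ : Fin n)
        (by simp only [Equiv.Perm.mul_apply, gk, gk1, Fin.val_mk]; split_ifs <;> omega))]
    ring
  rw [wklWord_self, show ([k, k - 1] : List ℕ) = ([k] ++ [k - 1]) from rfl,
    defPoly_append_single]
  rw [ite1_eq_one (gen n k) (k - 1) (by omega) (by omega)
      (by simp only [gk, Fin.val_mk]; split_ifs <;> omega)]
  rw [ite2_eq_X (gen n k) (k - 1) (by omega) (by omega)
      (by simp only [gk, Fin.val_mk]; split_ifs <;> omega)]
  rw [e3, e4]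
  ring

end Base

section Step

variable {n k l : ℕ}

lemma stepF (hk : 2 ≤ k) (hkl : k ≤ l) (hln1 : l + 1 < n) :
    defPoly n (wklWord k (l + 1)) 1
      = defPoly n (wklWord k l) 1 + X * defPoly n (wklWord k l) (gen n l) := by
  have gl := gen_val (n := n) l (by omega) (by omega)
  have gl1 := gen_val (n := n) (l + 1) (by omega) hln1
  have hW : wklWord k (l + 1) = (wklWord k l ++ [l + 1]) ++ [l] := by
    rw [wklWord_succ k l hkl]
    exact (List.append_assoc (wklWord k l) [l + 1] [l]).symm
  have zA : defPoly n (wklWord k l) (gen n (l + 1)) = 0 :=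
    defPoly_eq_zero _ _ l (l + 1) (wklWord_le k l hkl) hln1 (by omega)
      (gen_apply_ne_self (l + 1) (by omega) hln1)
  have zB : defPoly n (wklWord k l) (gen n l * gen n (l + 1)) = 0 := by
    apply defPoly_eq_zero _ _ l (l + 1) (wklWord_le k l hkl) hln1 (by omega)
    intro he
    have hv := congrArg Fin.val he
    simp only [Equiv.Perm.mul_apply, gl, gl1, Fin.val_mk] at hv
    split_ifs at hv <;> omega
  rw [hW, defPoly_append_single]
  rw [ite1_eq_one 1 l (by omega) (by omega)
      (by simp only [Equiv.Perm.one_apply, Fin.val_mk]; omega)]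
  rw [ite2_eq_X 1 l (by omega) (by omega)
      (by simp only [Equiv.Perm.one_apply, Fin.val_mk]; omega)]
  rw [one_mul, one_mul]
  rw [defPoly_append_single, defPoly_append_single]
  rw [ite1_eq_one 1 (l + 1) (by omega) hln1
      (by simp only [Equiv.Perm.one_apply, Fin.val_mk]; omega)]
  rw [ite2_eq_X 1 (l + 1) (by omega) hln1
      (by simp only [Equiv.Perm.one_apply, Fin.val_mk]; omega)]
  rw [ite1_eq_one (gen n l) (l + 1) (by omega) hln1
      (by simp only [gl, Fin.val_mk]; split_ifs <;> omega)]
  rw [ite2_eq_X (gen n l) (l + 1) (by omega) hln1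
      (by simp only [gl, Fin.val_mk]; split_ifs <;> omega)]
  rw [one_mul, one_mul, one_mul, zA, zB]
  ring

lemma stepG (hk : 2 ≤ k) (hkl : k ≤ l) (hln1 : l + 1 < n) :
    defPoly n (wklWord k (l + 1)) (gen n (l + 1)) = defPoly n (wklWord k l) 1 := by
  have gl := gen_val (n := n) l (by omega) (by omega)
  have gl1 := gen_val (n := n) (l + 1) (by omega) hln1
  have hW : wklWord k (l + 1) = (wklWord k l ++ [l + 1]) ++ [l] := by
    rw [wklWord_succ k l hkl]
    exact (List.append_assoc (wklWord k l) [l + 1] [l]).symm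
  have zA : defPoly n (wklWord k l) (gen n (l + 1)) = 0 :=
    defPoly_eq_zero _ _ l (l + 1) (wklWord_le k l hkl) hln1 (by omega)
      (gen_apply_ne_self (l + 1) (by omega) hln1)
  have zC : defPoly n (wklWord k l) (gen n (l + 1) * gen n l) = 0 := by
    apply defPoly_eq_zero _ _ l (l + 1) (wklWord_le k l hkl) hln1 (by omega)
    intro he
    have hv := congrArg Fin.val he
    simp only [Equiv.Perm.mul_apply, gl, gl1, Fin.val_mk] at hv
    split_ifs at hv <;> omega
  have zD : defPoly n (wklWord k l) (gen n (l + 1) * gen n l * gen n (l + 1)) = 0 := by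
    apply defPoly_eq_zero _ _ l (l + 1) (wklWord_le k l hkl) hln1 (by omega)
    intro he
    have hv := congrArg Fin.val he
    simp only [Equiv.Perm.mul_apply, gl, gl1, Fin.val_mk] at hv
    split_ifs at hv <;> omega
  rw [hW, defPoly_append_single]
  rw [ite1_eq_one (gen n (l + 1)) l (by omega) (by omega)
      (by simp only [gl1, Fin.val_mk]; split_ifs <;> omega)]
  rw [ite2_eq_X (gen n (l + 1)) l (by omega) (by omega)
      (by simp only [gl1, Fin.val_mk]; split_ifs <;> omega)]
  rw [one_mul]
  rw [defPoly_append_single, defPoly_append_single]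
  rw [ite1_eq_X (gen n (l + 1)) (l + 1) (by omega) hln1
      (by simp only [gl1, Fin.val_mk]; split_ifs <;> omega)]
  rw [ite2_eq_one (gen n (l + 1)) (l + 1) (by omega) hln1
      (by simp only [gl1, Fin.val_mk]; split_ifs <;> omega)]
  rw [ite1_eq_one (gen n (l + 1) * gen n l) (l + 1) (by omega) hln1
      (by simp only [Equiv.Perm.mul_apply, gl, gl1, Fin.val_mk]; split_ifs <;> omega)]
  rw [ite2_eq_X (gen n (l + 1) * gen n l) (l + 1) (by omega) hln1
      (by simp only [Equiv.Perm.mul_apply, gl, gl1, Fin.val_mk]; split_ifs <;> omega)]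
  rw [gen_mul_self, one_mul, one_mul, zA, zC, zD]
  ring

end Step

lemma qFib_zero : qFib 0 = 1 := by rw [qFib]
lemma qFib_one : qFib 1 = 1 := by rw [qFib]
lemma qFib_succ_succ (m : ℕ) : qFib (m + 2) = qFib (m + 1) + X * qFib m := by rw [qFib]


/-- the defect generating polynomial at the identity for the reduced word
`s_k s_{k-1} s_{k+1} s_k ⋯ s_l s_{l-1}` is the q-Fibonacci polynomial `F_{l-k+1}(q)`. -/
theorem stmt13 (n k l : ℕ) (h2 : 2 ≤ k) (hkl : k ≤ l) (hln : l < n) :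
    defPoly n (wklWord k l) 1 = qFib (l - k + 1) := by
  suffices H : ∀ m, k ≤ m → m < n →
      defPoly n (wklWord k m) 1 = qFib (m - k + 1) ∧
      defPoly n (wklWord k m) (gen n m) = qFib (m - k) by
    exact (H l hkl hln).1
  intro m hm
  induction m, hm using Nat.le_induction with
  | base =>
    intro hkn
    constructor
    · rw [base_F h2 hkn, show k - k + 1 = 1 from by omega, qFib_one]
    · rw [base_G h2 hkn, Nat.sub_self, qFib_zero]
  | succ m hm ih =>
    intro hmn
    have hm' : m < n := by omega
    obtain ⟨hF, hG⟩ := ih hm'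
    constructor
    · rw [stepF h2 hm hmn, hF, hG, show m + 1 - k + 1 = (m - k) + 2 from by omega,
        qFib_succ_succ]
    · rw [stepG h2 hm hmn, hF, show m + 1 - k = m - k + 1 from by omega]
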